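/- If s, t ∈ ℂ∖[0,∞) satisfy W(s) = W(t), then there exists an integer k such that s = t·e^{2ikβ} or s·t = e^{2ikβ}. -/

import Mathlib

/-- The lifted gluing function
`W(s) = −(1/2)(exp((π/β)·Log(−s)) + exp(−(π/β)·Log(−s)))`. -/
noncomputable def Wfun (β : ℝ) (s : ℂ) : ℂ :=
  -(1 / 2) * (Complex.exp (((Real.pi / β : ℝ) : ℂ) * Complex.log (-s)) +
    Complex.exp (-((Real.pi / β : ℝ) : ℂ) * Complex.log (-s)))

/-- If `W(s) = W(t)` for `s, t ∈ ℂ ∖ [0, ∞)`, then `s = t·e^{2ikβ}` or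
`s·t = e^{2ikβ}` for some integer `k`. -/
theorem stmt14 (σ11 σ12 σ22 : ℝ)
    (h11 : 0 < σ11) (h22 : 0 < σ22) (hdet : 0 < σ11 * σ22 - σ12 ^ 2)
    (β : ℝ) (hβ : β = Real.arccos (-σ12 / Real.sqrt (σ11 * σ22)))
    (s t : ℂ) (hs : ¬(s.im = 0 ∧ 0 ≤ s.re)) (ht : ¬(t.im = 0 ∧ 0 ≤ t.re))
    (hW : Wfun β s = Wfun β t) :
    ∃ k : ℤ, s = t * Complex.exp (2 * (k : ℂ) * (β : ℂ) * Complex.I) ∨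
      s * t = Complex.exp (2 * (k : ℂ) * (β : ℂ) * Complex.I) := by
  -- β ≠ 0
  have hprod : 0 < σ11 * σ22 := mul_pos h11 h22
  have hsq : Real.sqrt (σ11 * σ22) > -σ12 := by
    have h1 : |σ12| < Real.sqrt (σ11 * σ22) := by
      rw [← Real.sqrt_sq_eq_abs]
      exact Real.sqrt_lt_sqrt (sq_nonneg _) (by linarith)
    calc -σ12 ≤ |σ12| := neg_le_abs σ12
      _ < _ := h1
  have hβpos : 0 < β := by
    rw [hβ]
    rw [Real.arccos_pos]
    rw [div_lt_one (Real.sqrt_pos.mpr hprod)]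
    exact hsq
  have hβne : (β : ℂ) ≠ 0 := by exact_mod_cast hβpos.ne'
  have hπne : (Real.pi : ℂ) ≠ 0 := by exact_mod_cast Real.pi_ne_zero
  have hsne : s ≠ 0 := by
    intro h; exact hs ⟨by simp [h], by simp [h]⟩
  have htne : t ≠ 0 := by
    intro h; exact ht ⟨by simp [h], by simp [h]⟩
  have hnsne : -s ≠ 0 := neg_ne_zero.mpr hsne
  have hntne : -t ≠ 0 := neg_ne_zero.mpr htne
  set c : ℂ := ((Real.pi / β : ℝ) : ℂ) with hc
  have hcval : c = (Real.pi : ℂ) / (β : ℂ) := by push_cast [hc]; ring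
  set Ls := Complex.log (-s) with hLs
  set Lt := Complex.log (-t) with hLt
  set a := Complex.exp (c * Ls) with ha
  set b := Complex.exp (c * Lt) with hb
  have hane : a ≠ 0 := Complex.exp_ne_zero _
  have hbne : b ≠ 0 := Complex.exp_ne_zero _
  have heq : a + a⁻¹ = b + b⁻¹ := by
    have h := hW
    unfold Wfun at h
    simp only [neg_mul, Complex.exp_neg] at h
    linear_combination (-2 : ℂ) * h
  have key : (a - b) * (a * b - 1) = 0 := by
    field_simp at heq
    linear_combination heq
  rcases mul_eq_zero.mp key with h | h
  · -- a = b
    have hab : Complex.exp (c * Ls) = Complex.exp (c * Lt) := sub_eq_zero.mp h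
    obtain ⟨n, hn⟩ := Complex.exp_eq_exp_iff_exists_int.mp hab
    refine ⟨n, Or.inl ?_⟩
    rw [hcval] at hn
    field_simp at hn
    have hlog : Ls = Lt + 2 * (n : ℂ) * (β : ℂ) * Complex.I := by
      have h2 : (Real.pi : ℂ) * Ls = (Real.pi : ℂ) * (Lt + 2 * (n : ℂ) * (β : ℂ) * Complex.I) := by
        linear_combination (Real.pi : ℂ) * hn
      exact mul_left_cancel₀ hπne h2
    have h3 := congrArg Complex.exp hlog
    rw [Complex.exp_add, hLs, hLt, Complex.exp_log hnsne, Complex.exp_log hntne] at h3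
    linear_combination -h3
  · -- a * b = 1
    have hab : Complex.exp (c * (Ls + Lt)) = 1 := by
      rw [mul_add, Complex.exp_add]
      exact sub_eq_zero.mp h
    obtain ⟨n, hn⟩ := Complex.exp_eq_one_iff.mp hab
    refine ⟨n, Or.inr ?_⟩
    rw [hcval] at hn
    field_simp at hn
    have hlog : Ls + Lt = 2 * (n : ℂ) * (β : ℂ) * Complex.I := by
      have h2 : (Real.pi : ℂ) * (Ls + Lt) = (Real.pi : ℂ) * (2 * (n : ℂ) * (β : ℂ) * Complex.I) := by
        linear_combination (Real.pi : ℂ) * hn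
      exact mul_left_cancel₀ hπne h2
    have h3 := congrArg Complex.exp hlog
    rw [Complex.exp_add, hLs, hLt, Complex.exp_log hnsne, Complex.exp_log hntne] at h3
    linear_combination h3
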